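/- Let A₁ = [G₁ | t₁] and A₂ = [G₂ | t₂] be finite cameras with distinct centers c₁, c₂. Fix q ∈ ℝ⁴ ∖ {0} not proportional to c₁ or c₂ and not lying on the baseline (the span of c₁ and c₂), and write A_i·q = λ_i·p_i with λ_i ∈ ℝ and p_i ∈ ℝ³ ∖ {0}. Set a_i = G_i⁻¹p_i and b₁₂ = G₁⁻¹t₁ − G₂⁻¹t₂, and let × be the cross product on ℝ³. Then: b₁₂ᵀ(a₁ × a₂) = 0; sign(λ₁·q₄) = sign((a₁ × a₂)ᵀ(b₁₂ × a₂)); sign(λ₂·q₄) = sign((a₁ × a₂)ᵀ(b₁₂ × a₁)); and sign(λ₁·λ₂) = sign((b₁₂ × a₁)ᵀ(b₁₂ × a₂)). -/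

import Mathlib

open Matrix

noncomputable section

/-- Left 3x3 block `G` of a 3x4 camera matrix `A = [G | t]`. -/
def leftBlock (A : Matrix (Fin 3) (Fin 4) ℝ) : Matrix (Fin 3) (Fin 3) ℝ :=
  Matrix.of fun i j => A i j.castSucc

/-- Last column `t` of a 3x4 camera matrix `A = [G | t]`. -/
def tCol (A : Matrix (Fin 3) (Fin 4) ℝ) : Fin 3 → ℝ := fun i => A i 3

/-- A camera is finite if its left 3x3 block is invertible. -/
def FiniteCam (A : Matrix (Fin 3) (Fin 4) ℝ) : Prop := (leftBlock A).det ≠ 0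

/-- The center `(-G⁻¹ t, 1)` of a finite camera. -/
def camCenter (A : Matrix (Fin 3) (Fin 4) ℝ) : Fin 4 → ℝ :=
  Fin.snoc (-((leftBlock A)⁻¹ *ᵥ tCol A)) 1

/-- The principal ray `det G • (third row of A)`. -/
def principalRay (A : Matrix (Fin 3) (Fin 4) ℝ) : Fin 4 → ℝ :=
  (leftBlock A).det • A 2

/-- `n_∞ = (0,0,0,1)`. -/
def nInf : Fin 4 → ℝ := Fin.snoc (0 : Fin 3 → ℝ) 1

/-- The chiral domain `D_𝒜`: the closure, within `ℝ⁴ ∖ {0}` (i.e. ambient closure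
intersected with `ℝ⁴ ∖ {0}`), of the set of finite vectors (last coordinate nonzero)
having positive depth in every camera of the arrangement. -/
def chiralDomain {m : ℕ} (A : Fin m → Matrix (Fin 3) (Fin 4) ℝ) : Set (Fin 4 → ℝ) :=
  closure {q : Fin 4 → ℝ | nInf ⬝ᵥ q ≠ 0 ∧ ∀ i, 0 < (principalRay (A i) ⬝ᵥ q) * (nInf ⬝ᵥ q)}
    ∩ {q : Fin 4 → ℝ | q ≠ 0}

theorem collin (b y : Fin 3 → ℝ) (h : b ⨯₃ y = 0) (hb : b ≠ 0) : ∃ s : ℝ, y = s • b := by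
  have h0 := congrFun h 0
  have h1 := congrFun h 1
  have h2 := congrFun h 2
  simp [crossProduct] at h0 h1 h2
  have hex : ∃ i, b i ≠ 0 := by
    by_contra hc
    push_neg at hc
    exact hb (funext fun i => hc i)
  obtain ⟨i, hi⟩ := hex
  fin_cases i
  · have hb0 : b 0 ≠ 0 := hi
    have e0 : y 0 = y 0 / b 0 * b 0 := by field_simp
    have e1 : y 1 = y 0 / b 0 * b 1 := by field_simp; linarith
    have e2 : y 2 = y 0 / b 0 * b 2 := by field_simp; linarith
    exact ⟨y 0 / b 0, funext fun j => by fin_cases j <;> [exact e0; exact e1; exact e2]⟩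
  · have hb0 : b 1 ≠ 0 := hi
    have e0 : y 0 = y 1 / b 1 * b 0 := by field_simp; linarith
    have e1 : y 1 = y 1 / b 1 * b 1 := by field_simp
    have e2 : y 2 = y 1 / b 1 * b 2 := by field_simp; linarith
    exact ⟨y 1 / b 1, funext fun j => by fin_cases j <;> [exact e0; exact e1; exact e2]⟩
  · have hb0 : b 2 ≠ 0 := hi
    have e0 : y 0 = y 2 / b 2 * b 0 := by field_simp; linarith
    have e1 : y 1 = y 2 / b 2 * b 1 := by field_simp; linarith
    have e2 : y 2 = y 2 / b 2 * b 2 := by field_simp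
    exact ⟨y 2 / b 2, funext fun j => by fin_cases j <;> [exact e0; exact e1; exact e2]⟩

theorem sign_smul_pos (c x : ℝ) (hc : 0 < c) : Real.sign (c * x) = Real.sign x := by
  rcases lt_trichotomy x 0 with h | h | h
  · rw [Real.sign_of_neg h, Real.sign_of_neg (mul_neg_of_pos_of_neg hc h)]
  · simp [h]
  · rw [Real.sign_of_pos h, Real.sign_of_pos (mul_pos hc h)]

theorem decomp (A : Matrix (Fin 3) (Fin 4) ℝ) (q : Fin 4 → ℝ) :
    A *ᵥ q = leftBlock A *ᵥ (fun j => q j.castSucc) + q 3 • tCol A := by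
  funext i
  simp only [mulVec, dotProduct, Pi.add_apply, Pi.smul_apply, smul_eq_mul]
  rw [Fin.sum_univ_castSucc]
  simp [leftBlock, tCol, mul_comm]

theorem sign_helper (l m w V X : ℝ) (hl : l ≠ 0) (hm : m ≠ 0) (hV : 0 < V)
    (he : l * m * m * X = w * V) : Real.sign (l * w) = Real.sign X := by
  have hl2 : (0:ℝ) < l ^ 2 * m ^ 2 :=
    mul_pos (lt_of_le_of_ne (sq_nonneg l) (Ne.symm (pow_ne_zero 2 hl)))
      (lt_of_le_of_ne (sq_nonneg m) (Ne.symm (pow_ne_zero 2 hm)))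
  have hX : X = (V / (l ^ 2 * m ^ 2)) * (l * w) := by
    rw [div_mul_eq_mul_div, eq_div_iff (ne_of_gt hl2)]
    linear_combination l * he
  rw [hX]
  exact (sign_smul_pos _ _ (div_pos hV hl2)).symm

theorem sign_helper' (l m V Y : ℝ) (hl : l ≠ 0) (hm : m ≠ 0) (hV : 0 < V)
    (he : l * m * Y = V) : Real.sign (l * m) = Real.sign Y := by
  have hl2 : (0:ℝ) < l ^ 2 * m ^ 2 :=
    mul_pos (lt_of_le_of_ne (sq_nonneg l) (Ne.symm (pow_ne_zero 2 hl)))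
      (lt_of_le_of_ne (sq_nonneg m) (Ne.symm (pow_ne_zero 2 hm)))
  have hY : Y = (V / (l ^ 2 * m ^ 2)) * (l * m) := by
    rw [div_mul_eq_mul_div, eq_div_iff (ne_of_gt hl2)]
    linear_combination l * m * he
  rw [hY]
  exact (sign_smul_pos _ _ (div_pos hV hl2)).symm


/-- for two finite cameras with distinct centers and `q` not proportional to
either center and off the baseline, writing `A_i q = λ_i p_i` with `p_i ≠ 0`,
`a_i = G_i⁻¹p_i`, `b = G₁⁻¹t₁ − G₂⁻¹t₂`: `bᵀ(a₁ × a₂) = 0`,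
`sign(λ₁q₄) = sign((a₁ × a₂)ᵀ(b × a₂))`, `sign(λ₂q₄) = sign((a₁ × a₂)ᵀ(b × a₁))` and
`sign(λ₁λ₂) = sign((b × a₁)ᵀ(b × a₂))`. -/
theorem two_view_sign_relations
    (A₁ A₂ : Matrix (Fin 3) (Fin 4) ℝ)
    (h₁ : FiniteCam A₁) (h₂ : FiniteCam A₂)
    (hdist : camCenter A₁ ≠ camCenter A₂)
    (q : Fin 4 → ℝ) (hq : q ≠ 0)
    (hqc₁ : ¬ ∃ c : ℝ, q = c • camCenter A₁)
    (hqc₂ : ¬ ∃ c : ℝ, q = c • camCenter A₂)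
    (hbase : ¬ ∃ α β : ℝ, q = α • camCenter A₁ + β • camCenter A₂)
    (lam₁ lam₂ : ℝ) (p₁ p₂ : Fin 3 → ℝ) (hp₁ : p₁ ≠ 0) (hp₂ : p₂ ≠ 0)
    (him₁ : A₁ *ᵥ q = lam₁ • p₁) (him₂ : A₂ *ᵥ q = lam₂ • p₂)
    (a₁ a₂ b : Fin 3 → ℝ)
    (ha₁ : a₁ = (leftBlock A₁)⁻¹ *ᵥ p₁) (ha₂ : a₂ = (leftBlock A₂)⁻¹ *ᵥ p₂)
    (hb : b = (leftBlock A₁)⁻¹ *ᵥ tCol A₁ - (leftBlock A₂)⁻¹ *ᵥ tCol A₂) :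
    b ⬝ᵥ (a₁ ⨯₃ a₂) = 0 ∧
    Real.sign (lam₁ * q 3) = Real.sign ((a₁ ⨯₃ a₂) ⬝ᵥ (b ⨯₃ a₂)) ∧
    Real.sign (lam₂ * q 3) = Real.sign ((a₁ ⨯₃ a₂) ⬝ᵥ (b ⨯₃ a₁)) ∧
    Real.sign (lam₁ * lam₂) = Real.sign ((b ⨯₃ a₁) ⬝ᵥ (b ⨯₃ a₂)) := by
  set x : Fin 3 → ℝ := fun j => q j.castSucc with hx
  set w : ℝ := q 3 with hwdef
  set u₁ : Fin 3 → ℝ := (leftBlock A₁)⁻¹ *ᵥ tCol A₁ with hu₁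
  set u₂ : Fin 3 → ℝ := (leftBlock A₂)⁻¹ *ᵥ tCol A₂ with hu₂
  have hG₁ : (leftBlock A₁)⁻¹ * leftBlock A₁ = 1 :=
    Matrix.nonsing_inv_mul _ (isUnit_iff_ne_zero.mpr h₁)
  have hG₂ : (leftBlock A₂)⁻¹ * leftBlock A₂ = 1 :=
    Matrix.nonsing_inv_mul _ (isUnit_iff_ne_zero.mpr h₂)
  -- apply G⁻¹ to the imaging equations
  have hA1 : x + w • u₁ = lam₁ • a₁ := by
    have h := decomp A₁ q
    rw [him₁] at h
    have h' := congrArg (fun v => (leftBlock A₁)⁻¹ *ᵥ v) h.symm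
    simpa [Matrix.mulVec_add, Matrix.mulVec_smul, Matrix.mulVec_mulVec, hG₁,
      Matrix.one_mulVec, ha₁, hu₁, hx] using h'
  have hA2 : x + w • u₂ = lam₂ • a₂ := by
    have h := decomp A₂ q
    rw [him₂] at h
    have h' := congrArg (fun v => (leftBlock A₂)⁻¹ *ᵥ v) h.symm
    simpa [Matrix.mulVec_add, Matrix.mulVec_smul, Matrix.mulVec_mulVec, hG₂,
      Matrix.one_mulVec, ha₂, hu₂, hx] using h'
  -- lambdas are nonzero
  have hlam₁ : lam₁ ≠ 0 := by
    intro h0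
    rw [h0, zero_smul] at hA1
    refine hqc₁ ⟨w, funext fun j => ?_⟩
    refine Fin.lastCases ?_ (fun j => ?_) j
    · simp only [Pi.smul_apply, camCenter, Fin.snoc_last, smul_eq_mul, mul_one]
      rfl
    · have hcmp := congrFun hA1 j
      simp only [Pi.add_apply, Pi.smul_apply, Pi.zero_apply, smul_eq_mul, hx] at hcmp
      simp only [Pi.smul_apply, camCenter, ← hu₁, Fin.snoc_castSucc, Pi.neg_apply,
        smul_eq_mul]
      linarith
  have hlam₂ : lam₂ ≠ 0 := by
    intro h0
    rw [h0, zero_smul] at hA2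
    refine hqc₂ ⟨w, funext fun j => ?_⟩
    refine Fin.lastCases ?_ (fun j => ?_) j
    · simp only [Pi.smul_apply, camCenter, Fin.snoc_last, smul_eq_mul, mul_one]
      rfl
    · have hcmp := congrFun hA2 j
      simp only [Pi.add_apply, Pi.smul_apply, Pi.zero_apply, smul_eq_mul, hx] at hcmp
      simp only [Pi.smul_apply, camCenter, ← hu₂, Fin.snoc_castSucc, Pi.neg_apply,
        smul_eq_mul]
      linarith
  -- b nonzero
  have hbne : b ≠ 0 := by
    intro h0
    apply hdist
    have huu : u₁ = u₂ := by
      have h' := hb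
      rw [h0] at h'
      exact (sub_eq_zero.mp h'.symm)
    unfold camCenter
    rw [← hu₁, ← hu₂, huu]
  -- the fundamental relation
  have hw : lam₁ • a₁ - lam₂ • a₂ = w • b := by
    rw [← hA1, ← hA2, hb]
    funext i
    simp only [Pi.sub_apply, Pi.add_apply, Pi.smul_apply, smul_eq_mul]
    ring
  -- key cross-product identities
  have hv1 : lam₂ • (b ⨯₃ a₂) = lam₁ • (b ⨯₃ a₁) := by
    have h' : b ⨯₃ (lam₁ • a₁ - lam₂ • a₂) = b ⨯₃ (w • b) := by rw [hw]
    rw [map_sub, _root_.map_smul, _root_.map_smul, _root_.map_smul, cross_self,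
      smul_zero, sub_eq_zero] at h'
    exact h'.symm
  set v : Fin 3 → ℝ := lam₁ • (b ⨯₃ a₁) with hv
  have h2' : lam₂ • a₂ = lam₁ • a₁ - w • b := by
    funext i
    have hcmp := congrFun hw i
    simp only [Pi.sub_apply, Pi.smul_apply, smul_eq_mul] at hcmp ⊢
    linarith
  have hL : (lam₁ • a₁) ⨯₃ (lam₂ • a₂) = (lam₁ * lam₂) • (a₁ ⨯₃ a₂) := by
    rw [LinearMap.map_smul₂, _root_.map_smul, smul_smul]
  have hR : (lam₁ • a₁) ⨯₃ (lam₂ • a₂) = w • (lam₁ • (b ⨯₃ a₁)) := by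
    rw [h2', map_sub, cross_self, zero_sub, _root_.map_smul, ← smul_neg,
      cross_anticomm, _root_.map_smul]
  have hv2 : (lam₁ * lam₂) • (a₁ ⨯₃ a₂) = w • v := by
    rw [hv]
    exact hL.symm.trans hR
  -- v is nonzero
  have hvne : v ≠ 0 := by
    intro h0
    have hcz : b ⨯₃ (lam₁ • a₁) = 0 := by
      rw [_root_.map_smul]
      exact h0
    rw [← hA1] at hcz
    obtain ⟨s, hs⟩ := collin b (x + w • u₁) hcz hbne
    refine hbase ⟨w - s, s, funext fun j => ?_⟩
    refine Fin.lastCases ?_ (fun j => ?_) j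
    · have hlast : q (Fin.last 3) = w := rfl
      simp only [Pi.add_apply, Pi.smul_apply, camCenter, Fin.snoc_last, smul_eq_mul,
        mul_one, hlast]
      ring
    · have h1 := congrFun hs j
      have h2 := congrFun hb j
      simp only [Pi.add_apply, Pi.smul_apply, Pi.sub_apply, smul_eq_mul, hx] at h1 h2
      simp only [Pi.add_apply, Pi.smul_apply, camCenter, ← hu₁, ← hu₂,
        Fin.snoc_castSucc, Pi.neg_apply, smul_eq_mul]
      linear_combination h1 + s * h2
  have hvv : 0 < v ⬝ᵥ v := by
    have h := (dotProduct_self_eq_zero (v := v)).not.mpr hvne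
    have hnn : 0 ≤ v ⬝ᵥ v := Finset.sum_nonneg fun i _ => mul_self_nonneg _
    exact lt_of_le_of_ne hnn (Ne.symm h)
  have dd : ∀ (c d : ℝ) (y z : Fin 3 → ℝ), (c • y) ⬝ᵥ (d • z) = c * d * (y ⬝ᵥ z) := by
    intro c d y z
    rw [smul_dotProduct, dotProduct_smul, smul_eq_mul, smul_eq_mul, mul_assoc]
  -- part 1
  have part1 : b ⬝ᵥ (a₁ ⨯₃ a₂) = 0 := by
    have hbv : b ⬝ᵥ v = 0 := by
      rw [hv, dotProduct_smul, dot_self_cross, smul_zero]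
    have e : b ⬝ᵥ ((lam₁ * lam₂) • (a₁ ⨯₃ a₂)) = b ⬝ᵥ (w • v) := by rw [hv2]
    rw [dotProduct_smul, dotProduct_smul, hbv, smul_zero, smul_eq_mul] at e
    exact (mul_eq_zero.mp e).resolve_left (mul_ne_zero hlam₁ hlam₂)
  refine ⟨part1, ?_, ?_, ?_⟩
  -- part 2
  · have e := congrArg₂ (fun y z => y ⬝ᵥ z) hv2 hv1
    beta_reduce at e
    rw [dd, smul_dotProduct, smul_eq_mul] at e
    have he : lam₁ * lam₂ * lam₂ * ((a₁ ⨯₃ a₂) ⬝ᵥ (b ⨯₃ a₂)) = w * (v ⬝ᵥ v) := by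
      linear_combination e
    exact sign_helper lam₁ lam₂ w (v ⬝ᵥ v) _ hlam₁ hlam₂ hvv he
  -- part 3
  · have e := congrArg₂ (fun y z => y ⬝ᵥ z) hv2 hv.symm
    beta_reduce at e
    rw [dd, smul_dotProduct, smul_eq_mul] at e
    have he : lam₂ * lam₁ * lam₁ * ((a₁ ⨯₃ a₂) ⬝ᵥ (b ⨯₃ a₁)) = w * (v ⬝ᵥ v) := by
      linear_combination e
    exact sign_helper lam₂ lam₁ w (v ⬝ᵥ v) _ hlam₂ hlam₁ hvv he
  -- part 4
  · have e := congrArg₂ (fun y z => y ⬝ᵥ z) hv.symm hv1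
    beta_reduce at e
    rw [dd] at e
    have he : lam₁ * lam₂ * ((b ⨯₃ a₁) ⬝ᵥ (b ⨯₃ a₂)) = v ⬝ᵥ v := by
      linear_combination e
    exact sign_helper' lam₁ lam₂ (v ⬝ᵥ v) _ hlam₁ hlam₂ hvv he
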